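/- arXiv:1801.06636 — 8 statements merged into one kernel-verified Lean document; each statement's English description precedes it below -/
import Mathlib

section
/- Let M be a nonempty compact topological space and f = (f₁,f₂), g = (g₁,g₂) : M → ℝ² continuous. For (a,b) with 0 < a < 1 and b ∈ ℝ, set N(a,b) := sup over x ∈ M of |f*₍a,b₎(x) − g*₍a,b₎(x)|, and set ‖f − g‖∞ := sup over x ∈ M of max(|f₁(x) − g₁(x)|, |f₂(x) − g₂(x)|). Then ‖f − g‖∞ = sup over all (a,b) ∈ ]0,1[ × ℝ of N(a,b) = sup over all b ∈ ℝ of N(1/2, b). -/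
/-- The normalized filtering function `f*_(a,b)` associated with the pair `(a,b)`. -/
noncomputable def fStar {M : Type*} (f₁ f₂ : M → ℝ) (a b : ℝ) (x : M) : ℝ :=
  min a (1 - a) * max ((f₁ x - b) / a) ((f₂ x + b) / (1 - a))

lemma fStar_abs_sub_le {M : Type*} (f₁ f₂ g₁ g₂ : M → ℝ) {a : ℝ}
    (ha : 0 < a) (ha1 : a < 1) (b : ℝ) (x : M) :
    |fStar f₁ f₂ a b x - fStar g₁ g₂ a b x| ≤ max (|f₁ x - g₁ x|) (|f₂ x - g₂ x|) := by
  have ha' : (0:ℝ) < 1 - a := by linarith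
  have hc0 : 0 < min a (1 - a) := lt_min ha ha'
  unfold fStar
  rw [← mul_sub, abs_mul, abs_of_pos hc0]
  have h1 : |max ((f₁ x - b)/a) ((f₂ x + b)/(1-a)) - max ((g₁ x - b)/a) ((g₂ x + b)/(1-a))|
      ≤ max (|(f₁ x - b)/a - (g₁ x - b)/a|) (|(f₂ x + b)/(1-a) - (g₂ x + b)/(1-a)|) :=
    abs_max_sub_max_le_max _ _ _ _
  have e1 : (f₁ x - b)/a - (g₁ x - b)/a = (f₁ x - g₁ x)/a := by ring
  have e2 : (f₂ x + b)/(1-a) - (g₂ x + b)/(1-a) = (f₂ x - g₂ x)/(1-a) := by ring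
  rw [e1, e2, abs_div, abs_div, abs_of_pos ha, abs_of_pos ha'] at h1
  refine le_trans (mul_le_mul_of_nonneg_left h1 hc0.le) ?_
  rw [mul_max_of_nonneg _ _ hc0.le]
  refine max_le_max ?_ ?_
  · calc min a (1-a) * (|f₁ x - g₁ x|/a)
        ≤ a * (|f₁ x - g₁ x|/a) :=
          mul_le_mul_of_nonneg_right (min_le_left _ _) (div_nonneg (abs_nonneg _) ha.le)
      _ = |f₁ x - g₁ x| := by field_simp
  · calc min a (1-a) * (|f₂ x - g₂ x|/(1-a))
        ≤ (1-a) * (|f₂ x - g₂ x|/(1-a)) :=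
          mul_le_mul_of_nonneg_right (min_le_right _ _) (div_nonneg (abs_nonneg _) ha'.le)
      _ = |f₂ x - g₂ x| := by field_simp

lemma fStar_half_left {M : Type*} (f₁ f₂ : M → ℝ) (b : ℝ) (x : M)
    (h : f₂ x + b ≤ f₁ x - b) : fStar f₁ f₂ (1/2) b x = f₁ x - b := by
  unfold fStar
  rw [max_eq_left]
  · norm_num
    ring
  · rw [div_le_div_iff₀ (by norm_num) (by norm_num)]
    linarith

lemma fStar_half_right {M : Type*} (f₁ f₂ : M → ℝ) (b : ℝ) (x : M)
    (h : f₁ x - b ≤ f₂ x + b) : fStar f₁ f₂ (1/2) b x = f₂ x + b := by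
  unfold fStar
  rw [max_eq_right]
  · norm_num
    ring
  · rw [div_le_div_iff₀ (by norm_num) (by norm_num)]
    linarith

/-- Proposition 2.2 -/
theorem stmt_1 {M : Type*} [TopologicalSpace M] [CompactSpace M] [Nonempty M]
    (f₁ f₂ g₁ g₂ : M → ℝ)
    (hf₁ : Continuous f₁) (hf₂ : Continuous f₂)
    (hg₁ : Continuous g₁) (hg₂ : Continuous g₂) :
    (⨆ x : M, max (|f₁ x - g₁ x|) (|f₂ x - g₂ x|)) =
      (⨆ p : {q : ℝ × ℝ // 0 < q.1 ∧ q.1 < 1},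
        ⨆ x : M, |fStar f₁ f₂ p.1.1 p.1.2 x - fStar g₁ g₂ p.1.1 p.1.2 x|) ∧
    (⨆ x : M, max (|f₁ x - g₁ x|) (|f₂ x - g₂ x|)) =
      (⨆ b : ℝ, ⨆ x : M, |fStar f₁ f₂ (1/2) b x - fStar g₁ g₂ (1/2) b x|) := by
  set D : M → ℝ := fun x => max (|f₁ x - g₁ x|) (|f₂ x - g₂ x|) with hDdef
  have hDc : Continuous D := ((hf₁.sub hg₁).abs.max (hf₂.sub hg₂).abs)
  have hDbdd : BddAbove (Set.range D) := (isCompact_range hDc).bddAbove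
  set K := ⨆ x, D x with hKdef
  have hDK : ∀ x, D x ≤ K := fun x => le_ciSup hDbdd x
  -- pointwise bound on all filtered differences
  have hinner : ∀ (a b : ℝ), 0 < a → a < 1 → ∀ x : M,
      |fStar f₁ f₂ a b x - fStar g₁ g₂ a b x| ≤ K := fun a b ha ha1 x =>
    (fStar_abs_sub_le f₁ f₂ g₁ g₂ ha ha1 b x).trans (hDK x)
  -- choices of b
  obtain ⟨bf, hbf⟩ : ∃ m : ℝ, ∀ x, m ≤ f₁ x - f₂ x := by
    obtain ⟨m, hm⟩ := (isCompact_range (hf₁.sub hf₂)).bddBelow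
    exact ⟨m, fun x => hm ⟨x, rfl⟩⟩
  obtain ⟨bg, hbg⟩ : ∃ m : ℝ, ∀ x, m ≤ g₁ x - g₂ x := by
    obtain ⟨m, hm⟩ := (isCompact_range (hg₁.sub hg₂)).bddBelow
    exact ⟨m, fun x => hm ⟨x, rfl⟩⟩
  obtain ⟨cf, hcf⟩ : ∃ m : ℝ, ∀ x, f₁ x - f₂ x ≤ m := by
    obtain ⟨m, hm⟩ := (isCompact_range (hf₁.sub hf₂)).bddAbove
    exact ⟨m, fun x => hm ⟨x, rfl⟩⟩
  obtain ⟨cg, hcg⟩ : ∃ m : ℝ, ∀ x, g₁ x - g₂ x ≤ m := by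
    obtain ⟨m, hm⟩ := (isCompact_range (hg₁.sub hg₂)).bddAbove
    exact ⟨m, fun x => hm ⟨x, rfl⟩⟩
  set bneg : ℝ := min bf bg / 2 with hbneg
  set bpos : ℝ := max cf cg / 2 with hbpos
  have hnf : ∀ x, f₂ x + bneg ≤ f₁ x - bneg := fun x => by
    have h1 := hbf x; have h2 : min bf bg ≤ bf := min_le_left _ _
    rw [hbneg]; linarith
  have hng : ∀ x, g₂ x + bneg ≤ g₁ x - bneg := fun x => by
    have h1 := hbg x; have h2 : min bf bg ≤ bg := min_le_right _ _
    rw [hbneg]; linarith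
  have hpf : ∀ x, f₁ x - bpos ≤ f₂ x + bpos := fun x => by
    have h1 := hcf x; have h2 : cf ≤ max cf cg := le_max_left _ _
    rw [hbpos]; linarith
  have hpg : ∀ x, g₁ x - bpos ≤ g₂ x + bpos := fun x => by
    have h1 := hcg x; have h2 : cg ≤ max cf cg := le_max_right _ _
    rw [hbpos]; linarith
  -- for each b, the inner family is bounded by K
  have hbddx : ∀ b : ℝ, BddAbove (Set.range fun x : M =>
      |fStar f₁ f₂ (1/2) b x - fStar g₁ g₂ (1/2) b x|) := fun b =>
    ⟨K, by rintro _ ⟨x, rfl⟩; exact hinner (1/2) b (by norm_num) (by norm_num) x⟩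
  have hbddb : BddAbove (Set.range fun b : ℝ =>
      ⨆ x : M, |fStar f₁ f₂ (1/2) b x - fStar g₁ g₂ (1/2) b x|) :=
    ⟨K, by rintro _ ⟨b, rfl⟩; exact ciSup_le (hinner (1/2) b (by norm_num) (by norm_num))⟩
  have hbddp : BddAbove (Set.range fun p : {q : ℝ × ℝ // 0 < q.1 ∧ q.1 < 1} =>
      ⨆ x : M, |fStar f₁ f₂ p.1.1 p.1.2 x - fStar g₁ g₂ p.1.1 p.1.2 x|) :=
    ⟨K, by rintro _ ⟨p, rfl⟩; exact ciSup_le (fun x => hinner p.1.1 p.1.2 p.2.1 p.2.2 x)⟩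
  have hbddxp : ∀ (a b : ℝ), 0 < a → a < 1 → BddAbove (Set.range fun x : M =>
      |fStar f₁ f₂ a b x - fStar g₁ g₂ a b x|) := fun a b ha ha1 =>
    ⟨K, by rintro _ ⟨x, rfl⟩; exact hinner a b ha ha1 x⟩
  -- key equalities at a = 1/2
  have keyneg : ∀ x : M,
      |f₁ x - g₁ x| = |fStar f₁ f₂ (1/2) bneg x - fStar g₁ g₂ (1/2) bneg x| := fun x => by
    rw [fStar_half_left f₁ f₂ bneg x (hnf x), fStar_half_left g₁ g₂ bneg x (hng x)]
    congr 1; ring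
  have keypos : ∀ x : M,
      |f₂ x - g₂ x| = |fStar f₁ f₂ (1/2) bpos x - fStar g₁ g₂ (1/2) bpos x| := fun x => by
    rw [fStar_half_right f₁ f₂ bpos x (hpf x), fStar_half_right g₁ g₂ bpos x (hpg x)]
    congr 1; ring
  have h1le : ∀ x : M, |f₁ x - g₁ x| ≤
      ⨆ b : ℝ, ⨆ x : M, |fStar f₁ f₂ (1/2) b x - fStar g₁ g₂ (1/2) b x| := fun x => by
    rw [keyneg x]
    exact le_trans (le_ciSup (hbddx bneg) x) (le_ciSup hbddb bneg)
  have h2le : ∀ x : M, |f₂ x - g₂ x| ≤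
      ⨆ b : ℝ, ⨆ x : M, |fStar f₁ f₂ (1/2) b x - fStar g₁ g₂ (1/2) b x| := fun x => by
    rw [keypos x]
    exact le_trans (le_ciSup (hbddx bpos) x) (le_ciSup hbddb bpos)
  haveI : Nonempty {q : ℝ × ℝ // 0 < q.1 ∧ q.1 < 1} := ⟨⟨(1/2, 0), by norm_num⟩⟩
  constructor
  · apply le_antisymm
    · refine ciSup_le fun x => max_le ?_ ?_
      · rw [keyneg x]
        refine le_trans (le_ciSup (hbddx bneg) x) ?_
        exact le_ciSup hbddp (⟨(1/2, bneg), by norm_num⟩ : {q : ℝ × ℝ // 0 < q.1 ∧ q.1 < 1})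
      · rw [keypos x]
        refine le_trans (le_ciSup (hbddx bpos) x) ?_
        exact le_ciSup hbddp (⟨(1/2, bpos), by norm_num⟩ : {q : ℝ × ℝ // 0 < q.1 ∧ q.1 < 1})
    · exact ciSup_le fun p => ciSup_le fun x =>
        le_trans (fStar_abs_sub_le f₁ f₂ g₁ g₂ p.2.1 p.2.2 p.1.2 x) (hDK x)
  · apply le_antisymm
    · exact ciSup_le fun x => max_le (h1le x) (h2le x)
    · exact ciSup_le fun b => ciSup_le fun x =>
        le_trans (fStar_abs_sub_le f₁ f₂ g₁ g₂ (by norm_num) (by norm_num) b x) (hDK x)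
end

section
/- Define, on the closed half-plane D := {(u,v) ∈ ℝ² : u ≤ v}, the function d((u,v),(u',v')) := min( max(|u − u'|, |v − v'|), max((v − u)/2, (v' − u')/2) ). Then d is a pseudometric on D: it is nonnegative, d(X,X) = 0 for all X, symmetric, and satisfies the triangle inequality d(X,Z) ≤ d(X,Y) + d(Y,Z) for all X, Y, Z ∈ D. -/
/-- The distance (1) of the paper on the closed half-plane `{(u,v) : u ≤ v}`. -/
noncomputable def dDelta (P Q : ℝ × ℝ) : ℝ :=
  min (max |P.1 - Q.1| |P.2 - Q.2|) (max ((P.2 - P.1) / 2) ((Q.2 - Q.1) / 2))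

/-- `dDelta` is a pseudometric on `D = {(u,v) : u ≤ v}`: nonnegative, zero on the
diagonal of `D × D`, symmetric, and satisfying the triangle inequality. -/
theorem stmt_5 :
    (∀ P : ℝ × ℝ, P.1 ≤ P.2 → ∀ Q : ℝ × ℝ, Q.1 ≤ Q.2 → 0 ≤ dDelta P Q) ∧
    (∀ P : ℝ × ℝ, P.1 ≤ P.2 → dDelta P P = 0) ∧
    (∀ P Q : ℝ × ℝ, P.1 ≤ P.2 → Q.1 ≤ Q.2 → dDelta P Q = dDelta Q P) ∧
    (∀ P Q R : ℝ × ℝ, P.1 ≤ P.2 → Q.1 ≤ Q.2 → R.1 ≤ R.2 →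
      dDelta P R ≤ dDelta P Q + dDelta Q R) := by
  refine ⟨?_, ?_, ?_, ?_⟩
  · intro P hP Q hQ
    exact le_min (le_max_of_le_left (abs_nonneg _))
      (le_max_of_le_left (by linarith))
  · intro P hP
    simp [dDelta]
    linarith
  · intro P Q hP hQ
    unfold dDelta
    rw [abs_sub_comm P.1 Q.1, abs_sub_comm P.2 Q.2, max_comm ((P.2 - P.1)/2)]
  · intro P Q R hP hQ hR
    unfold dDelta
    set A := max |P.1 - Q.1| |P.2 - Q.2| with hA
    set B := max |Q.1 - R.1| |Q.2 - R.2| with hB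
    have habs : ∀ x y : ℝ, x - y ≤ |x - y| := fun x y => le_abs_self _
    have habs' : ∀ x y : ℝ, y - x ≤ |x - y| := fun x y => by
      rw [abs_sub_comm]; exact le_abs_self _
    have hA1 : |P.1 - Q.1| ≤ A := le_max_left _ _
    have hA2 : |P.2 - Q.2| ≤ A := le_max_right _ _
    have hB1 : |Q.1 - R.1| ≤ B := le_max_left _ _
    have hB2 : |Q.2 - R.2| ≤ B := le_max_right _ _
    have hAnn : (0:ℝ) ≤ A := le_trans (abs_nonneg _) hA1
    have hBnn : (0:ℝ) ≤ B := le_trans (abs_nonneg _) hB1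
    set p := (P.2 - P.1) / 2 with hp
    set q := (Q.2 - Q.1) / 2 with hq
    set r := (R.2 - R.1) / 2 with hr
    have hpn : (0:ℝ) ≤ p := by simp [hp]; linarith
    have hqn : (0:ℝ) ≤ q := by simp [hq]; linarith
    have hrn : (0:ℝ) ≤ r := by simp [hr]; linarith
    -- key bounds: |p - q| ≤ A, |q - r| ≤ B (in each direction)
    have hpq : p ≤ q + A := by
      have h1 := habs P.2 Q.2
      have h2 := habs' P.1 Q.1
      have : p - q ≤ A := by
        rw [hp, hq]
        nlinarith [le_trans h1 hA2, le_trans h2 hA1]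
      linarith
    have hqr : r ≤ q + B := by
      have h1 := habs' Q.2 R.2
      have h2 := habs Q.1 R.1
      have : r - q ≤ B := by
        rw [hr, hq]
        nlinarith [le_trans h1 hB2, le_trans h2 hB1]
      linarith
    -- four bounds
    have key1 : min (max |P.1 - R.1| |P.2 - R.2|) (max p r) ≤ A + B := by
      refine le_trans (min_le_left _ _) (max_le ?_ ?_)
      · calc |P.1 - R.1| ≤ |P.1 - Q.1| + |Q.1 - R.1| := abs_sub_le _ _ _
          _ ≤ A + B := add_le_add hA1 hB1
      · calc |P.2 - R.2| ≤ |P.2 - Q.2| + |Q.2 - R.2| := abs_sub_le _ _ _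
          _ ≤ A + B := add_le_add hA2 hB2
    have key2 : min (max |P.1 - R.1| |P.2 - R.2|) (max p r) ≤ max p q + max q r := by
      refine le_trans (min_le_right _ _) (max_le ?_ ?_)
      · have h1 : p ≤ max p q := le_max_left _ _
        have h2 : (0:ℝ) ≤ max q r := le_trans hqn (le_max_left _ _)
        linarith
      · have h1 : r ≤ max q r := le_max_right _ _
        have h2 : (0:ℝ) ≤ max p q := le_trans hpn (le_max_left _ _)
        linarith
    have key3 : min (max |P.1 - R.1| |P.2 - R.2|) (max p r) ≤ A + max q r := by
      refine le_trans (min_le_right _ _) (max_le ?_ ?_)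
      · have : q ≤ max q r := le_max_left _ _
        linarith
      · have : r ≤ max q r := le_max_right _ _
        linarith
    have key4 : min (max |P.1 - R.1| |P.2 - R.2|) (max p r) ≤ max p q + B := by
      refine le_trans (min_le_right _ _) (max_le ?_ ?_)
      · have : p ≤ max p q := le_max_left _ _
        linarith
      · have : q ≤ max p q := le_max_right _ _
        linarith
    rcases min_cases A (max p q) with ⟨e1, _⟩ | ⟨e1, _⟩ <;>
      rcases min_cases B (max q r) with ⟨e2, _⟩ | ⟨e2, _⟩ <;>
      rw [e1, e2]
    · exact key1
    · exact key3
    · exact key4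
    · exact key2
end

section
/- Let X be a metric space, c > 0, U a topological space, and D : U → Set X a Hausdorff-continuous family of nonempty 2c-separated subsets. Let π : [0,1] → U be a continuous path. Then for every point X₀ ∈ D(π(0)) there exists a unique continuous map P : [0,1] → X such that P(0) = X₀ and P(τ) ∈ D(π(τ)) for every τ ∈ [0,1]. -/
open unitInterval

/-- `P` is a lift of the path `π` through the family of subsets `D`. -/
def IsLift {X U : Type*} [MetricSpace X] [TopologicalSpace U]
    (D : U → Set X) (π : unitInterval → U) (P : unitInterval → X) : Prop :=
  Continuous P ∧ ∀ τ : unitInterval, P τ ∈ D (π τ)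

/-- Transport: a point of `S` has a unique close point in `T` when the two sets are
Hausdorff-close and `T` is `2c`-separated. -/
lemma transport_lemma {X : Type*} [MetricSpace X] {c : ℝ} (hc : 0 < c) {S T : Set X}
    (hsepT : ∀ x ∈ T, ∀ y ∈ T, x ≠ y → 2 * c < dist x y)
    (h : EMetric.hausdorffEdist S T ≤ ENNReal.ofReal (c / 4)) {x : X} (hx : x ∈ S) :
    ∃! y, y ∈ T ∧ dist x y ≤ c / 2 := by
  have h1 : EMetric.infEdist x T < ENNReal.ofReal (c / 2) := by
    refine lt_of_le_of_lt (le_trans (EMetric.infEdist_le_hausdorffEdist_of_mem hx) h) ?_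
    rw [ENNReal.ofReal_lt_ofReal_iff (by linarith)]
    linarith
  obtain ⟨y, hyT, hy⟩ := EMetric.infEdist_lt_iff.mp h1
  rw [edist_lt_ofReal] at hy
  refine ⟨y, ⟨hyT, hy.le⟩, ?_⟩
  rintro z ⟨hzT, hz⟩
  by_contra hne
  have hzy : dist z y ≤ c := by
    calc dist z y ≤ dist z x + dist x y := dist_triangle ..
    _ ≤ c / 2 + c / 2 := by rw [dist_comm z x]; exact add_le_add hz hy.le
    _ = c := by ring
  linarith [hsepT z hzT y hyT hne]

/-- Unique path lifting (abstract form of Proposition 4.2): if `D` is a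
Hausdorff-continuous family of nonempty `2c`-separated subsets of a metric space and
`π` is a continuous path in `U`, then every `X₀ ∈ D (π 0)` admits a unique continuous
lift `P` of `π` with `P 0 = X₀`. -/
theorem stmt_7 {X U : Type*} [MetricSpace X] [TopologicalSpace U]
    (c : ℝ) (hc : 0 < c) (D : U → Set X)
    (hne : ∀ p : U, (D p).Nonempty)
    (hsep : ∀ p : U, ∀ x ∈ D p, ∀ y ∈ D p, x ≠ y → 2 * c < dist x y)
    (hcont : ∀ p : U, ∀ ε : ℝ, 0 < ε → ∃ V ∈ nhds p, ∀ q ∈ V,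
      EMetric.hausdorffEdist (D p) (D q) ≤ ENNReal.ofReal ε)
    (π : unitInterval → U) (hπ : Continuous π) :
    ∀ X₀ ∈ D (π 0), ∃! P : unitInterval → X, IsLift D π P ∧ P 0 = X₀ := by
  intro X₀ hX₀
  -- Uniqueness of lifts with given initial point
  have key : ∀ P Q : unitInterval → X, IsLift D π P → IsLift D π Q → P 0 = Q 0 → P = Q := by
    intro P Q hP hQ h0
    have hclopen : IsClopen {t | P t = Q t} := by
      constructor
      · exact isClosed_eq hP.1 hQ.1
      · rw [isOpen_iff_mem_nhds]
        intro t ht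
        have h1 : ∀ᶠ s in nhds t, dist (P s) (P t) < c :=
          Metric.tendsto_nhds.mp (hP.1.tendsto t) c hc
        have h2 : ∀ᶠ s in nhds t, dist (Q s) (Q t) < c :=
          Metric.tendsto_nhds.mp (hQ.1.tendsto t) c hc
        filter_upwards [h1, h2] with s hs1 hs2
        by_contra hne
        have hlt := hsep (π s) (P s) (hP.2 s) (Q s) (hQ.2 s) hne
        rw [Set.mem_setOf_eq] at ht
        have htri := dist_triangle (P s) (P t) (Q s)
        rw [ht] at htri hs1
        rw [dist_comm (Q t) (Q s)] at htri
        linarith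
    have huniv : {t | P t = Q t} = Set.univ := hclopen.eq_univ ⟨0, h0⟩
    funext t
    exact (Set.eq_univ_iff_forall.mp huniv t)
  -- Uniform continuity of the family along the path
  have unif : ∀ ε : ℝ, 0 < ε → ∃ δ > 0, ∀ s t : unitInterval, dist s t < δ →
      EMetric.hausdorffEdist (D (π s)) (D (π t)) ≤ ENNReal.ofReal ε := by
    intro ε hε
    have h2 : ∀ t : unitInterval, ∃ V ∈ nhds (π t), ∀ q ∈ V,
        EMetric.hausdorffEdist (D (π t)) (D q) ≤ ENNReal.ofReal (ε / 2) :=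
      fun t => hcont (π t) (ε / 2) (by linarith)
    choose V hV hVp using h2
    have hcov : (Set.univ : Set unitInterval) ⊆ ⋃ t, interior (π ⁻¹' V t) := fun t _ =>
      Set.mem_iUnion.2 ⟨t, mem_interior_iff_mem_nhds.2 (hπ.continuousAt.preimage_mem_nhds (hV t))⟩
    obtain ⟨δ, hδpos, hball⟩ := lebesgue_number_lemma_of_metric isCompact_univ
      (fun _ => isOpen_interior) hcov
    refine ⟨δ, hδpos, fun s t hst => ?_⟩
    obtain ⟨i, hi⟩ := hball s (Set.mem_univ s)
    have hs : s ∈ π ⁻¹' V i := interior_subset (hi (Metric.mem_ball_self hδpos))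
    have ht : t ∈ π ⁻¹' V i := interior_subset (hi (by rwa [Metric.mem_ball, dist_comm]))
    calc EMetric.hausdorffEdist (D (π s)) (D (π t))
        ≤ EMetric.hausdorffEdist (D (π s)) (D (π i)) +
          EMetric.hausdorffEdist (D (π i)) (D (π t)) := EMetric.hausdorffEdist_triangle
      _ ≤ ENNReal.ofReal (ε / 2) + ENNReal.ofReal (ε / 2) := by
          refine add_le_add ?_ (hVp i _ ht)
          rw [show EMetric.hausdorffEdist (D (π s)) (D (π i)) = EMetric.hausdorffEdist (D (π i)) (D (π s)) from EMetric.hausdorffEdist_comm]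
          exact hVp i _ hs
      _ = ENNReal.ofReal ε := by
          rw [← ENNReal.ofReal_add (by linarith) (by linarith)]
          norm_num
  obtain ⟨δ, hδpos, hδ⟩ := unif (c / 4) (by linarith)
  obtain ⟨n, hn⟩ := exists_nat_one_div_lt hδpos
  set N : ℕ := n + 1 with hNdef
  have hNpos : (0 : ℝ) < N := by positivity
  have hND : 1 / (N : ℝ) < δ := by
    have : ((n : ℝ) + 1) = (N : ℝ) := by push_cast [hNdef]; ring
    rwa [this] at hn
  -- grid points
  set g : ℕ → unitInterval := fun k => Set.projIcc (0 : ℝ) 1 zero_le_one ((k : ℝ) / N) with hgdef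
  have hg_lip : ∀ a b : ℝ, dist (Set.projIcc (0 : ℝ) 1 zero_le_one a)
      (Set.projIcc (0 : ℝ) 1 zero_le_one b) ≤ dist a b := by
    intro a b
    have := (LipschitzWith.projIcc (zero_le_one (α := ℝ))).dist_le_mul a b
    simpa using this
  have hg_dist : ∀ (k : ℕ) (t : unitInterval), (k : ℝ) / N ≤ t.1 →
      t.1 ≤ ((k : ℝ) + 1) / N → dist (g k) t < δ := by
    intro k t h1 h2
    have ht' : t = Set.projIcc (0 : ℝ) 1 zero_le_one t.1 := (Set.projIcc_val zero_le_one t).symm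
    have hb : dist ((k : ℝ) / N) t.1 ≤ 1 / N := by
      rw [Real.dist_eq, abs_le]
      have h2' : t.1 ≤ (k : ℝ) / N + 1 / N := by rwa [← add_div]
      constructor <;> [linarith; linarith [div_nonneg (by positivity : (0:ℝ) ≤ (k:ℝ)) hNpos.le,
        t.2.1, le_trans (div_nonneg (Nat.cast_nonneg k) hNpos.le) h1]]
    calc dist (g k) t = dist (Set.projIcc (0 : ℝ) 1 zero_le_one ((k : ℝ) / N))
          (Set.projIcc (0 : ℝ) 1 zero_le_one t.1) := by rw [hgdef]; exact congrArg _ ht'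
      _ ≤ dist ((k : ℝ) / N) t.1 := hg_lip _ _
      _ ≤ 1 / N := hb
      _ < δ := hND
  have hg_adj : ∀ k : ℕ, dist (g k) (g (k + 1)) < δ := by
    intro k
    calc dist (g k) (g (k + 1)) ≤ dist ((k : ℝ) / N) (((k : ℕ) + 1 : ℕ) / N) := hg_lip _ _
      _ = 1 / N := by
          rw [Real.dist_eq]
          push_cast
          rw [abs_sub_comm, ← sub_div]
          ring_nf
          rw [abs_of_nonneg (by positivity)]
      _ < δ := hND
  -- transport function
  have trans : ∀ s t : unitInterval, dist s t < δ → ∀ x, x ∈ D (π s) →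
      ∃! y, y ∈ D (π t) ∧ dist x y ≤ c / 2 :=
    fun s t hst x hx => transport_lemma hc (hsep (π t)) (hδ s t hst) hx
  choose f hf using trans
  -- anchor sequence
  have hg0 : g 0 = 0 := by
    apply Subtype.ext
    simp [hgdef, Set.projIcc]
  let xx : (k : ℕ) → {y : X // y ∈ D (π (g k))} := fun k =>
    Nat.rec (motive := fun k => {y : X // y ∈ D (π (g k))})
      ⟨X₀, by rw [hg0]; exact hX₀⟩
      (fun k ih => ⟨f (g k) (g (k + 1)) (hg_adj k) ih.1 ih.2,
        (hf (g k) (g (k + 1)) (hg_adj k) ih.1 ih.2).1.1⟩) k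
  have hxx0 : (xx 0).1 = X₀ := rfl
  have hxxd : ∀ k : ℕ, dist (xx k).1 (xx (k + 1)).1 ≤ c / 2 := fun k =>
    (hf (g k) (g (k + 1)) (hg_adj k) (xx k).1 (xx k).2).1.2
  -- index function
  let K : unitInterval → ℕ := fun t => min ⌊t.1 * N⌋₊ n
  have hK1 : ∀ t : unitInterval, ((K t : ℕ) : ℝ) / N ≤ t.1 := by
    intro t
    rw [div_le_iff₀ hNpos]
    calc ((K t : ℕ) : ℝ) ≤ (⌊t.1 * N⌋₊ : ℝ) := by
          exact_mod_cast Nat.cast_le.mpr (min_le_left _ _)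
      _ ≤ t.1 * N := Nat.floor_le (mul_nonneg t.2.1 hNpos.le)
  have hK2 : ∀ t : unitInterval, t.1 ≤ (((K t : ℕ) : ℝ) + 1) / N := by
    intro t
    by_cases hfl : ⌊t.1 * N⌋₊ ≤ n
    · have hKt : K t = ⌊t.1 * N⌋₊ := min_eq_left hfl
      rw [hKt, le_div_iff₀ hNpos]
      exact (Nat.lt_floor_add_one (t.1 * N)).le
    · have hKt : K t = n := min_eq_right (le_of_not_ge hfl)
      rw [hKt]
      have : ((n : ℝ) + 1) / N = 1 := by
        rw [div_eq_one_iff_eq (ne_of_gt hNpos)]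
        push_cast [hNdef]; ring
      rw [this]
      exact t.2.2
  have hKd : ∀ t : unitInterval, dist (g (K t)) t < δ := fun t =>
    hg_dist (K t) t (hK1 t) (hK2 t)
  -- the lift
  let P : unitInterval → X := fun t => f (g (K t)) t (hKd t) (xx (K t)).1 (xx (K t)).2
  have hPmem : ∀ t : unitInterval, P t ∈ D (π t) ∧ dist (xx (K t)).1 (P t) ≤ c / 2 :=
    fun t => (hf (g (K t)) t (hKd t) (xx (K t)).1 (xx (K t)).2).1
  have hPuniq : ∀ t : unitInterval, ∀ z, z ∈ D (π t) → dist (xx (K t)).1 z ≤ c / 2 → z = P t :=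
    fun t z h1 h2 => (hf (g (K t)) t (hKd t) (xx (K t)).1 (xx (K t)).2).2 z ⟨h1, h2⟩
  -- initial point
  have hK0 : K 0 = 0 := by
    have : ((0 : unitInterval) : ℝ) = 0 := rfl
    simp [K, this]
  have hP0 : P 0 = X₀ := by
    have hxK0 : (xx (K 0)).1 = X₀ := by rw [hK0]; exact hxx0
    refine (hPuniq 0 X₀ hX₀ ?_).symm
    rw [hxK0, dist_self]
    linarith
  -- adjacency of indices
  have hKadj : ∀ s t : unitInterval, dist s t < 1 / N → K s ≤ K t + 1 := by
    intro s t hst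
    have hst' : s.1 * N ≤ t.1 * N + 1 := by
      have h1 : s.1 - t.1 ≤ 1 / N := by
        have h := le_of_lt hst
        rw [Subtype.dist_eq, Real.dist_eq] at h
        have h' := abs_le.mp h
        linarith [h'.1, h'.2]
      have h2 : (s.1 - t.1) * N ≤ (1 / N) * N := by
        exact mul_le_mul_of_nonneg_right h1 hNpos.le
      rw [one_div, inv_mul_cancel₀ (ne_of_gt hNpos)] at h2
      nlinarith
    have hfloor : ⌊s.1 * N⌋₊ ≤ ⌊t.1 * N⌋₊ + 1 := by
      calc ⌊s.1 * N⌋₊ ≤ ⌊t.1 * N + 1⌋₊ := Nat.floor_le_floor hst'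
        _ = ⌊t.1 * N⌋₊ + 1 := Nat.floor_add_one (mul_nonneg t.2.1 hNpos.le)
    simp only [K]
    omega
  have hxxadj : ∀ k l : ℕ, k ≤ l + 1 → l ≤ k + 1 → dist (xx k).1 (xx l).1 ≤ c / 2 := by
    intro k l h1 h2
    rcases Nat.lt_trichotomy k l with h | h | h
    · have : l = k + 1 := by omega
      subst this
      exact hxxd k
    · subst h; rw [dist_self]; linarith
    · have : k = l + 1 := by omega
      subst this
      rw [dist_comm]
      exact hxxd l
  have hPP : ∀ s t : unitInterval, dist s t < 1 / N → dist (P s) (P t) ≤ 3 * c / 2 := by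
    intro s t hst
    have h1 := (hPmem s).2
    have h2 := (hPmem t).2
    have h3 : dist (xx (K s)).1 (xx (K t)).1 ≤ c / 2 :=
      hxxadj _ _ (hKadj s t hst) (hKadj t s (by rwa [dist_comm]))
    calc dist (P s) (P t) ≤ dist (P s) (xx (K s)).1 + dist (xx (K s)).1 (xx (K t)).1
          + dist (xx (K t)).1 (P t) := dist_triangle4 _ _ _ _
      _ ≤ c / 2 + c / 2 + c / 2 := by
          rw [dist_comm (P s)]
          exact add_le_add (add_le_add h1 h3) h2
      _ = 3 * c / 2 := by ring
  -- continuity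
  have hPcont : Continuous P := by
    rw [Metric.continuous_iff]
    intro b ε hε
    set ε' := min (ε / 3) (c / 8) with hε'def
    have hε'pos : 0 < ε' := lt_min (by linarith) (by linarith)
    obtain ⟨δ₂, hδ₂pos, hδ₂⟩ := unif ε' hε'pos
    refine ⟨min δ₂ (1 / N), lt_min hδ₂pos (by positivity), fun a ha => ?_⟩
    have hHE : EMetric.hausdorffEdist (D (π a)) (D (π b)) ≤ ENNReal.ofReal ε' :=
      hδ₂ a b (lt_of_lt_of_le ha (min_le_left _ _))
    have hfar : dist (P a) (P b) ≤ 3 * c / 2 := hPP a b (lt_of_lt_of_le ha (min_le_right _ _))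
    obtain ⟨y, hy, hyd⟩ : ∃ y ∈ D (π b), dist (P a) y < 2 * ε' := by
      have hlt : EMetric.infEdist (P a) (D (π b)) < ENNReal.ofReal (2 * ε') := by
        refine lt_of_le_of_lt (le_trans (EMetric.infEdist_le_hausdorffEdist_of_mem
          (hPmem a).1) hHE) ?_
        rw [ENNReal.ofReal_lt_ofReal_iff (by linarith)]
        linarith
      obtain ⟨y, hy, hyd⟩ := EMetric.infEdist_lt_iff.mp hlt
      exact ⟨y, hy, edist_lt_ofReal.mp hyd⟩
    have hε'c : ε' ≤ c / 8 := min_le_right _ _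
    have hyb : y = P b := by
      by_contra hne
      have hs := hsep (π b) y hy (P b) (hPmem b).1 hne
      have : dist y (P b) ≤ 2 * ε' + 3 * c / 2 := by
        calc dist y (P b) ≤ dist y (P a) + dist (P a) (P b) := dist_triangle ..
          _ ≤ 2 * ε' + 3 * c / 2 := by
              rw [dist_comm y (P a)]
              exact add_le_add hyd.le hfar
      linarith
    rw [← hyb]
    have : ε' ≤ ε / 3 := min_le_left _ _
    linarith
  -- conclusion
  refine ⟨P, ⟨⟨hPcont, fun t => (hPmem t).1⟩, hP0⟩, ?_⟩
  rintro Q ⟨hQ, hQ0⟩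
  exact key Q P hQ ⟨hPcont, fun t => (hPmem t).1⟩ (by rw [hQ0, hP0])
end

section
/- Let X be a metric space, c > 0, U a topological space, and D : U → Set X a Hausdorff-continuous family of nonempty 2c-separated subsets. Let π : [0,1] → U be a continuous path. Then the transport map T_π : D(π(0)) → D(π(1)), sending each X₀ ∈ D(π(0)) to the endpoint P(1) of the unique lift P of π with P(0) = X₀, is a bijection from D(π(0)) onto D(π(1)), and its inverse is the transport map T_{π⁻¹} along the reverse path π⁻¹(t) := π(1−t). -/
open unitInterval

section Aux

variable {X U : Type*} [MetricSpace X] [TopologicalSpace U]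

private lemma sep_unique {c : ℝ} {D : U → Set X}
    (hsep : ∀ p : U, ∀ x ∈ D p, ∀ y ∈ D p, x ≠ y → 2 * c < dist x y)
    {p : U} {y y' : X} (hy : y ∈ D p) (hy' : y' ∈ D p) (h : dist y y' ≤ 2 * c) :
    y = y' := by
  by_contra hne
  exact absurd h (not_le.mpr (hsep p y hy y' hy' hne))

private lemma exists_near {D : U → Set X} {p q : U} {ε : ℝ} (hε : 0 < ε)
    (h : EMetric.hausdorffEdist (D p) (D q) ≤ ENNReal.ofReal ε)
    {x : X} (hx : x ∈ D p) : ∃ y ∈ D q, dist x y ≤ 2 * ε := by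
  have h1 : EMetric.infEdist x (D q) < ENNReal.ofReal (2 * ε) :=
    lt_of_le_of_lt ((EMetric.infEdist_le_hausdorffEdist_of_mem hx).trans h)
      ((ENNReal.ofReal_lt_ofReal_iff (by linarith)).mpr (by linarith))
  obtain ⟨y, hyq, hy⟩ := EMetric.infEdist_lt_iff.mp h1
  exact ⟨y, hyq, (edist_lt_ofReal.mp hy).le⟩

private lemma key_delta {c : ℝ} (hc : 0 < c) {D : U → Set X}
    (hcont : ∀ p : U, ∀ ε : ℝ, 0 < ε → ∃ V ∈ nhds p, ∀ q ∈ V,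
      EMetric.hausdorffEdist (D p) (D q) ≤ ENNReal.ofReal ε)
    (ρ : unitInterval → U) (hρ : Continuous ρ) :
    ∃ δ > 0, ∀ s s' : unitInterval, dist s s' ≤ δ →
      EMetric.hausdorffEdist (D (ρ s)) (D (ρ s')) ≤ ENNReal.ofReal (c / 8) := by
  choose V hV hVb using fun t : unitInterval => hcont (ρ t) (c / 16) (by positivity)
  have hcov : (Set.univ : Set unitInterval) ⊆ ⋃ t, interior (ρ ⁻¹' V t) := by
    intro t _
    exact Set.mem_iUnion.mpr ⟨t, mem_interior_iff_mem_nhds.mpr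
      (hρ.continuousAt.preimage_mem_nhds (hV t))⟩
  obtain ⟨δ, hδ, hball⟩ := lebesgue_number_lemma_of_metric isCompact_univ
    (fun _ => isOpen_interior) hcov
  refine ⟨δ / 2, by linarith, fun s s' hss => ?_⟩
  obtain ⟨t, ht⟩ := hball s (Set.mem_univ s)
  have hs : ρ s ∈ V t := by
    have h' : s ∈ ρ ⁻¹' V t := interior_subset (ht (Metric.mem_ball_self hδ))
    exact h'
  have hs' : ρ s' ∈ V t := by
    have h' : s' ∈ ρ ⁻¹' V t := interior_subset (ht (by
      rw [Metric.mem_ball, dist_comm]; linarith))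
    exact h'
  calc EMetric.hausdorffEdist (D (ρ s)) (D (ρ s'))
      ≤ EMetric.hausdorffEdist (D (ρ s)) (D (ρ t)) +
        EMetric.hausdorffEdist (D (ρ t)) (D (ρ s')) := EMetric.hausdorffEdist_triangle
    _ ≤ ENNReal.ofReal (c / 16) + ENNReal.ofReal (c / 16) := by
        gcongr
        · exact EMetric.hausdorffEdist_comm.trans_le (hVb t (ρ s) hs)
        · exact hVb t (ρ s') hs'
    _ = ENNReal.ofReal (c / 8) := by
        rw [← ENNReal.ofReal_add (by positivity) (by positivity)]; congr 1; ring

private lemma lift_exists {c : ℝ} (hc : 0 < c) {D : U → Set X}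
    (hsep : ∀ p : U, ∀ x ∈ D p, ∀ y ∈ D p, x ≠ y → 2 * c < dist x y)
    (hcont : ∀ p : U, ∀ ε : ℝ, 0 < ε → ∃ V ∈ nhds p, ∀ q ∈ V,
      EMetric.hausdorffEdist (D p) (D q) ≤ ENNReal.ofReal ε)
    (ρ : unitInterval → U) (hρ : Continuous ρ)
    {x : X} (hx : x ∈ D (ρ 0)) :
    ∃ P : unitInterval → X, IsLift D ρ P ∧ P 0 = x := by
  classical
  obtain ⟨δ, hδ, hkey⟩ := key_delta hc hcont ρ hρ
  set A : Set ℝ := {t | ∃ P : unitInterval → X, Continuous P ∧ P 0 = x ∧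
    ∀ s : unitInterval, (s : ℝ) ≤ t → P s ∈ D (ρ s)} with hA
  have h0 : (0 : ℝ) ∈ A := by
    refine ⟨fun _ => x, continuous_const, rfl, fun s hs => ?_⟩
    have hs0 : s = 0 := by
      apply Subtype.ext
      have := s.2.1
      simp only [Set.Icc.coe_zero]
      linarith
    rw [hs0]; exact hx
  have step : ∀ t, t ∈ A → 0 ≤ t → t < 1 → min (t + δ) 1 ∈ A := by
    rintro t ⟨P, hPc, hP0, hPl⟩ ht0 ht1
    set t₁ : unitInterval := ⟨t, ht0, ht1.le⟩ with ht₁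
    set b₁ : unitInterval := ⟨min (t + δ) 1, le_min (by linarith) zero_le_one,
      min_le_right _ _⟩ with hb₁
    have htb : t₁ ≤ b₁ := Subtype.mk_le_mk.mpr (le_min (by linarith) ht1.le)
    set cl : unitInterval → unitInterval := fun s => max t₁ (min s b₁) with hcl
    have hclc : Continuous cl := continuous_const.max (continuous_id.min continuous_const)
    have hPt : P t₁ ∈ D (ρ t₁) := hPl t₁ le_rfl
    have hcl_dist : ∀ s, dist t₁ (cl s) ≤ δ := by
      intro s
      have h1 : t ≤ (cl s : ℝ) := by exact_mod_cast le_max_left t₁ (min s b₁)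
      have h2 : (cl s : ℝ) ≤ min (t + δ) 1 := by
        exact_mod_cast max_le htb (min_le_right s b₁)
      have h3 : (cl s : ℝ) ≤ t + δ := h2.trans (min_le_left _ _)
      rw [Subtype.dist_eq, Real.dist_eq, abs_le]
      exact ⟨by linarith, by linarith⟩
    have hF : ∀ s : unitInterval, ∃ y ∈ D (ρ (cl s)), dist (P t₁) y ≤ 2 * (c / 8) :=
      fun s => exists_near (by positivity) (hkey t₁ (cl s) (hcl_dist s)) hPt
    choose F hF1 hF2 using hF
    have hFb : ∀ s, dist (P t₁) (F s) ≤ c / 4 := fun s => by linarith [hF2 s]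
    have hclt : cl t₁ = t₁ := by
      rw [hcl]; simp [min_eq_left htb]
    have hFt : F t₁ = P t₁ := by
      have h1 : F t₁ ∈ D (ρ t₁) := by have h' := hF1 t₁; rw [hclt] at h'; exact h'
      refine sep_unique hsep h1 hPt ?_
      have := hFb t₁
      rw [dist_comm]; linarith
    have hFc : Continuous F := by
      rw [Metric.continuous_iff]
      intro s₀ ε hε
      set ε' := min ε c with hε'def
      have hε' : 0 < ε' := lt_min hε hc
      obtain ⟨V, hV, hVb⟩ := hcont (ρ (cl s₀)) (ε' / 4) (by positivity)
      have hnhds : cl ⁻¹' (ρ ⁻¹' V) ∈ nhds s₀ :=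
        hclc.continuousAt.preimage_mem_nhds (hρ.continuousAt.preimage_mem_nhds hV)
      obtain ⟨r, hr, hball⟩ := Metric.mem_nhds_iff.mp hnhds
      refine ⟨r, hr, fun s hs => ?_⟩
      have hmem : ρ (cl s) ∈ V := hball (Metric.mem_ball.mpr hs)
      obtain ⟨z, hz1, hz2⟩ := exists_near (by positivity) (hVb _ hmem) (hF1 s₀)
      have hε'ε : ε' ≤ ε := min_le_left _ _
      have hε'c : ε' ≤ c := min_le_right _ _
      have hzF : z = F s := by
        refine sep_unique hsep hz1 (hF1 s) ?_
        have hA1 := hFb s₀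
        have hA2 := hFb s
        calc dist z (F s) ≤ dist z (F s₀) + dist (F s₀) (P t₁) + dist (P t₁) (F s) :=
              dist_triangle4 _ _ _ _
          _ ≤ 2 * (ε' / 4) + c / 4 + c / 4 := by
              rw [dist_comm z (F s₀), dist_comm (F s₀) (P t₁)]
              gcongr
          _ ≤ 2 * c := by linarith
      rw [← hzF, dist_comm]
      calc dist (F s₀) z ≤ 2 * (ε' / 4) := hz2
        _ < ε := by linarith
    set Q : unitInterval → X := fun s => if (s : ℝ) ≤ t then P s else F s with hQ
    have hQc : Continuous Q := by
      refine Continuous.if_le hPc hFc continuous_subtype_val continuous_const fun s hs => ?_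
      have hst : s = t₁ := Subtype.ext hs
      rw [hst, hFt]
    refine ⟨Q, hQc, ?_, ?_⟩
    · show (if ((0 : unitInterval) : ℝ) ≤ t then P 0 else F 0) = x
      rw [if_pos (by simpa using ht0), hP0]
    · intro s hs
      by_cases hst : (s : ℝ) ≤ t
      · show (if (s : ℝ) ≤ t then P s else F s) ∈ D (ρ s)
        rw [if_pos hst]; exact hPl s hst
      · show (if (s : ℝ) ≤ t then P s else F s) ∈ D (ρ s)
        rw [if_neg hst]
        have hsb : s ≤ b₁ := Subtype.mk_le_mk.mpr hs
        have hts : t₁ ≤ s := Subtype.mk_le_mk.mpr (le_of_lt (not_le.mp hst))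
        have hcls : cl s = s := by
          rw [hcl]; simp [min_eq_left hsb, max_eq_right hts]
        have h' := hF1 s; rw [hcls] at h'; exact h'
  have hn : ∀ n : ℕ, min ((n : ℝ) * δ) 1 ∈ A := by
    intro n
    induction n with
    | zero => rw [Nat.cast_zero, zero_mul, min_eq_left zero_le_one]; exact h0
    | succ n ih =>
      rcases lt_or_ge ((n : ℝ) * δ) 1 with h | h
      · rw [min_eq_left h.le] at ih
        have h' := step _ ih (by positivity) h
        rw [show (((n + 1 : ℕ)) : ℝ) * δ = (n : ℝ) * δ + δ by push_cast; ring]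
        exact h'
      · have h1 : (1 : ℝ) ≤ ((n + 1 : ℕ) : ℝ) * δ := by push_cast; nlinarith
        rw [min_eq_right h1]
        rw [min_eq_right h] at ih
        exact ih
  obtain ⟨n, hnδ⟩ := exists_nat_ge (1 / δ)
  have h1A : (1 : ℝ) ∈ A := by
    have h1n : (1 : ℝ) ≤ (n : ℝ) * δ := by
      rw [div_le_iff₀ hδ] at hnδ; linarith
    have := hn n
    rwa [min_eq_right h1n] at this
  obtain ⟨P, hPc, hP0, hPl⟩ := h1A
  exact ⟨P, ⟨hPc, fun s => hPl s s.2.2⟩, hP0⟩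

end Aux

/-- Abstract form of the claim that the transport `T_π` is a bijection from `D (π 0)`
onto `D (π 1)` whose inverse is the transport `T_{π⁻¹}` along the reverse path:
(1) the reverse of any lift of `π` is a lift of the reverse path `π⁻¹(t) = π(1−t)`;
(2) lifts of `π` with the same endpoint have the same starting point (injectivity);
(3) every point of `D (π 1)` is the endpoint of some lift of `π` (surjectivity). -/
theorem stmt_9 {X U : Type*} [MetricSpace X] [TopologicalSpace U]
    (c : ℝ) (hc : 0 < c) (D : U → Set X)
    (hne : ∀ p : U, (D p).Nonempty)
    (hsep : ∀ p : U, ∀ x ∈ D p, ∀ y ∈ D p, x ≠ y → 2 * c < dist x y)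
    (hcont : ∀ p : U, ∀ ε : ℝ, 0 < ε → ∃ V ∈ nhds p, ∀ q ∈ V,
      EMetric.hausdorffEdist (D p) (D q) ≤ ENNReal.ofReal ε)
    (π : unitInterval → U) (hπ : Continuous π) :
    (∀ P : unitInterval → X, IsLift D π P →
      IsLift D (π ∘ unitInterval.symm) (P ∘ unitInterval.symm)) ∧
    (∀ P Q : unitInterval → X, IsLift D π P → IsLift D π Q → P 1 = Q 1 → P 0 = Q 0) ∧
    (∀ Y ∈ D (π 1), ∃ P : unitInterval → X, IsLift D π P ∧ P 1 = Y) := by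
  refine ⟨?_, ?_, ?_⟩
  · rintro P ⟨hPc, hPm⟩
    exact ⟨hPc.comp unitInterval.continuous_symm, fun τ => hPm (σ τ)⟩
  · rintro P Q ⟨hPc, hPm⟩ ⟨hQc, hQm⟩ h1
    have hS : {τ : unitInterval | P τ = Q τ} = {τ | dist (P τ) (Q τ) < 2 * c} := by
      ext τ
      simp only [Set.mem_setOf_eq]
      constructor
      · intro h; rw [h, dist_self]; positivity
      · intro h
        by_contra hne'
        exact absurd h (not_lt.mpr (hsep (π τ) _ (hPm τ) _ (hQm τ) hne').le)
    have hclopen : IsClopen {τ : unitInterval | P τ = Q τ} := by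
      constructor
      · exact isClosed_eq hPc hQc
      · rw [hS]; exact isOpen_lt (hPc.dist hQc) continuous_const
    rcases isClopen_iff.mp hclopen with h | h
    · exfalso
      have : (1 : unitInterval) ∈ {τ : unitInterval | P τ = Q τ} := h1
      rw [h] at this
      exact Set.notMem_empty _ this
    · have : (0 : unitInterval) ∈ {τ : unitInterval | P τ = Q τ} := by
        rw [h]; exact Set.mem_univ _
      exact this
  · intro Y hY
    have hY' : Y ∈ D ((π ∘ σ) 0) := by
      show Y ∈ D (π (σ 0))
      rw [unitInterval.symm_zero]; exact hY
    obtain ⟨P, ⟨hPc, hPm⟩, hP0⟩ := lift_exists hc hsep hcont (π ∘ σ)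
      (hπ.comp unitInterval.continuous_symm) hY'
    refine ⟨P ∘ σ, ⟨hPc.comp unitInterval.continuous_symm, fun τ => ?_⟩, ?_⟩
    · have h := hPm (σ τ)
      simpa [unitInterval.symm_symm] using h
    · show P (σ 1) = Y
      rw [unitInterval.symm_one]; exact hP0
end

section
/- Let X be a metric space, c > 0, U a topological space, and D : U → Set X a Hausdorff-continuous family of nonempty 2c-separated subsets. Let π, π' : [0,1] → U be continuous paths with π(0) = π'(0) and π(1) = π'(1), which are homotopic relative to their common endpoints (i.e., there is a continuous H : [0,1] × [0,1] → U with H(t,0) = π(t), H(t,1) = π'(t), H(0,s) = π(0) and H(1,s) = π(1) for all t, s). Then for every X₀ ∈ D(π(0)), the unique lifts P of π and P' of π' with P(0) = P'(0) = X₀ satisfy P(1) = P'(1). In other words, the transport maps along homotopic paths coincide: T_π ≡ T_{π'}. -/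
open unitInterval

/-- Two points of a `2c`-separated set at distance `≤ 2c` coincide. -/
lemma eq_of_close_aux {X U : Type*} [MetricSpace X] {c : ℝ} {D : U → Set X}
    (hsep : ∀ p : U, ∀ x ∈ D p, ∀ y ∈ D p, x ≠ y → 2 * c < dist x y)
    {p : U} {x y : X} (hx : x ∈ D p) (hy : y ∈ D p) (h : dist x y ≤ 2 * c) : x = y := by
  by_contra hne
  exact absurd h (not_le.mpr (hsep p x hx y hy hne))

/-- Uniqueness of lifts starting at the same point. -/
lemma lift_unique_aux {X U : Type*} [MetricSpace X] [TopologicalSpace U]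
    {c : ℝ} (hc : 0 < c) {D : U → Set X}
    (hsep : ∀ p : U, ∀ x ∈ D p, ∀ y ∈ D p, x ≠ y → 2 * c < dist x y)
    {γ : unitInterval → U} {Q₁ Q₂ : unitInterval → X}
    (h1 : IsLift D γ Q₁) (h2 : IsLift D γ Q₂) (h0 : Q₁ 0 = Q₂ 0) :
    Q₁ = Q₂ := by
  have hA : IsClopen {t : unitInterval | Q₁ t = Q₂ t} := by
    constructor
    · exact isClosed_eq h1.1 h2.1
    · rw [isOpen_iff_mem_nhds]
      intro t₀ ht₀
      have e1 : ∀ᶠ t in nhds t₀, dist (Q₁ t) (Q₁ t₀) < c :=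
        (Metric.tendsto_nhds.mp (h1.1.continuousAt (x := t₀))) c hc
      have e2 : ∀ᶠ t in nhds t₀, dist (Q₂ t) (Q₂ t₀) < c :=
        (Metric.tendsto_nhds.mp (h2.1.continuousAt (x := t₀))) c hc
      filter_upwards [e1, e2] with t hd1 hd2
      have ht₀' : Q₁ t₀ = Q₂ t₀ := ht₀
      refine eq_of_close_aux hsep (h1.2 t) (h2.2 t) ?_
      have : dist (Q₁ t) (Q₂ t) ≤ dist (Q₁ t) (Q₁ t₀) + dist (Q₂ t₀) (Q₂ t) := by
        calc dist (Q₁ t) (Q₂ t) ≤ dist (Q₁ t) (Q₂ t₀) + dist (Q₂ t₀) (Q₂ t) :=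
              dist_triangle _ _ _
          _ ≤ dist (Q₁ t) (Q₁ t₀) + dist (Q₂ t₀) (Q₂ t) := by
              rw [ht₀']
      have hd2' : dist (Q₂ t₀) (Q₂ t) < c := by rwa [dist_comm]
      linarith
  have := hA.eq_univ ⟨0, h0⟩
  funext t
  have : t ∈ {t : unitInterval | Q₁ t = Q₂ t} := this ▸ Set.mem_univ t
  exact this

/-- Transfer a lift along a `c/4`-close path. -/
lemma lift_transfer_aux {X U : Type*} [MetricSpace X] [TopologicalSpace U]
    {c : ℝ} (hc : 0 < c) {D : U → Set X}
    (hsep : ∀ p : U, ∀ x ∈ D p, ∀ y ∈ D p, x ≠ y → 2 * c < dist x y)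
    (hcont : ∀ p : U, ∀ ε : ℝ, 0 < ε → ∃ V ∈ nhds p, ∀ q ∈ V,
      EMetric.hausdorffEdist (D p) (D q) ≤ ENNReal.ofReal ε)
    {γ γ' : unitInterval → U} (hγ' : Continuous γ')
    (hclose : ∀ t, EMetric.hausdorffEdist (D (γ t)) (D (γ' t)) ≤ ENNReal.ofReal (c / 4))
    {Q : unitInterval → X} (hQ : IsLift D γ Q) :
    ∃ Q' : unitInterval → X, IsLift D γ' Q' ∧ ∀ t, dist (Q t) (Q' t) ≤ c / 2 := by
  have hex : ∀ t : unitInterval, ∃ y ∈ D (γ' t), edist (Q t) y < ENNReal.ofReal (c / 2) := by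
    intro t
    refine EMetric.exists_edist_lt_of_hausdorffEdist_lt (hQ.2 t) ?_
    exact lt_of_le_of_lt (hclose t) (by
      apply ENNReal.ofReal_lt_ofReal_iff_of_nonneg (by linarith) |>.mpr
      linarith)
  choose Q' hmem hlt using hex
  have hdist : ∀ t, dist (Q t) (Q' t) < c / 2 := fun t => by
    have := hlt t
    rwa [edist_lt_ofReal] at this
  refine ⟨Q', ⟨?_, hmem⟩, fun t => (hdist t).le⟩
  rw [continuous_iff_continuousAt]
  intro t₀
  rw [ContinuousAt, Metric.tendsto_nhds]
  intro ε hε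
  set θ := min (ε / 3) (c / 8) with hθdef
  have hθ : 0 < θ := lt_min (by linarith) (by linarith)
  have hθc : θ ≤ c / 8 := min_le_right _ _
  have hθε : θ ≤ ε / 3 := min_le_left _ _
  -- nearby facts
  have e1 : ∀ᶠ t in nhds t₀, dist (Q t) (Q t₀) < θ :=
    (Metric.tendsto_nhds.mp (hQ.1.continuousAt (x := t₀))) θ hθ
  obtain ⟨V, hV, hVprop⟩ := hcont (γ' t₀) θ hθ
  have e2 : ∀ᶠ t in nhds t₀, γ' t ∈ V := hγ'.continuousAt (x := t₀) hV
  filter_upwards [e1, e2] with t hd hV'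
  -- D (γ' t) and D (γ' t₀) are θ-close
  have hhe : EMetric.hausdorffEdist (D (γ' t)) (D (γ' t₀)) ≤ ENNReal.ofReal θ := by
    exact (EMetric.hausdorffEdist_comm).trans_le (hVprop _ hV')
  obtain ⟨z, hz, hzlt⟩ : ∃ z ∈ D (γ' t₀), edist (Q' t) z < ENNReal.ofReal (2 * θ) := by
    refine EMetric.exists_edist_lt_of_hausdorffEdist_lt (hmem t) ?_
    exact lt_of_le_of_lt hhe (by
      apply ENNReal.ofReal_lt_ofReal_iff_of_nonneg hθ.le |>.mpr
      linarith)
  have hzd : dist (Q' t) z < 2 * θ := by rwa [edist_lt_ofReal] at hzlt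
  -- identify z with Q' t₀
  have hz_eq : z = Q' t₀ := by
    refine eq_of_close_aux hsep hz (hmem t₀) ?_
    have h1 : dist z (Q' t₀) ≤ dist z (Q' t) + dist (Q' t) (Q t) + dist (Q t) (Q t₀)
        + dist (Q t₀) (Q' t₀) := by
      calc dist z (Q' t₀) ≤ dist z (Q t₀) + dist (Q t₀) (Q' t₀) := dist_triangle _ _ _
        _ ≤ (dist z (Q t) + dist (Q t) (Q t₀)) + dist (Q t₀) (Q' t₀) := by
            have := dist_triangle z (Q t) (Q t₀); linarith
        _ ≤ dist z (Q' t) + dist (Q' t) (Q t) + dist (Q t) (Q t₀) + dist (Q t₀) (Q' t₀) := by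
            have := dist_triangle z (Q' t) (Q t); linarith
    have hz1 : dist z (Q' t) < 2 * θ := by rwa [dist_comm]
    have hq1 : dist (Q' t) (Q t) < c / 2 := by rw [dist_comm]; exact hdist t
    have hq2 : dist (Q t₀) (Q' t₀) < c / 2 := hdist t₀
    linarith
  calc dist (Q' t) (Q' t₀) = dist (Q' t) z := by rw [hz_eq]
    _ < 2 * θ := hzd
    _ < ε := by linarith

/-- Uniform closeness of nearby rows of the homotopy. -/
lemma row_close_aux {X U : Type*} [MetricSpace X] [TopologicalSpace U]
    {D : U → Set X}
    (hcont : ∀ p : U, ∀ ε : ℝ, 0 < ε → ∃ V ∈ nhds p, ∀ q ∈ V,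
      EMetric.hausdorffEdist (D p) (D q) ≤ ENNReal.ofReal ε)
    {H : unitInterval × unitInterval → U} (hH : Continuous H)
    (s₀ : unitInterval) {ε : ℝ} (hε : 0 < ε) :
    ∃ N ∈ nhds s₀, ∀ s ∈ N, ∀ t : unitInterval,
      EMetric.hausdorffEdist (D (H (t, s₀))) (D (H (t, s))) ≤ ENNReal.ofReal ε := by
  have key : ∀ t : unitInterval, ∃ A ∈ nhds t, ∃ B ∈ nhds s₀,
      ∀ t' ∈ A, ∀ s ∈ B, EMetric.hausdorffEdist (D (H (t, s₀))) (D (H (t', s)))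
        ≤ ENNReal.ofReal (ε / 2) := by
    intro t
    obtain ⟨V, hV, hVprop⟩ := hcont (H (t, s₀)) (ε / 2) (by linarith)
    have : H ⁻¹' V ∈ nhds ((t, s₀) : unitInterval × unitInterval) :=
      hH.continuousAt.preimage_mem_nhds hV
    rw [mem_nhds_prod_iff] at this
    obtain ⟨A, hA, B, hB, hsub⟩ := this
    exact ⟨A, hA, B, hB, fun t' ht' s hs => hVprop _ (hsub ⟨ht', hs⟩)⟩
  choose A hA B hB hprop using key
  obtain ⟨T, hT⟩ := isCompact_univ.elim_nhds_subcover A (fun t _ => hA t)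
  refine ⟨⋂ t ∈ T, B t, (Filter.biInter_finset_mem T).mpr (fun t _ => hB t), ?_⟩
  intro s hs t
  obtain ⟨t', ht'T, ht'⟩ := Set.mem_iUnion₂.mp (hT.2 (Set.mem_univ t))
  have hsB : s ∈ B t' := by
    have := Set.mem_iInter₂.mp hs t' ht'T
    exact this
  have hs₀B : s₀ ∈ B t' := mem_of_mem_nhds (hB t')
  have h1 := hprop t' t ht' s hsB
  have h2 := hprop t' t ht' s₀ hs₀B
  calc EMetric.hausdorffEdist (D (H (t, s₀))) (D (H (t, s)))
      ≤ EMetric.hausdorffEdist (D (H (t, s₀))) (D (H (t', s₀)))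
        + EMetric.hausdorffEdist (D (H (t', s₀))) (D (H (t, s))) :=
        EMetric.hausdorffEdist_triangle
    _ ≤ ENNReal.ofReal (ε / 2) + ENNReal.ofReal (ε / 2) := by
        refine add_le_add ?_ h1
        exact (EMetric.hausdorffEdist_comm).trans_le h2
    _ = ENNReal.ofReal ε := by
        rw [← ENNReal.ofReal_add (by linarith) (by linarith)]
        norm_num

/-- Abstract form of Proposition 4.8 (homotopy invariance of the transport): if `π` and
`π'` are continuous paths with the same endpoints which are homotopic relative to their
endpoints, then lifts of `π` and `π'` starting at the same point `X₀ ∈ D (π 0)` end at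
the same point, i.e. `T_π ≡ T_{π'}`. -/
theorem stmt_10 {X U : Type*} [MetricSpace X] [TopologicalSpace U]
    (c : ℝ) (hc : 0 < c) (D : U → Set X)
    (hne : ∀ p : U, (D p).Nonempty)
    (hsep : ∀ p : U, ∀ x ∈ D p, ∀ y ∈ D p, x ≠ y → 2 * c < dist x y)
    (hcont : ∀ p : U, ∀ ε : ℝ, 0 < ε → ∃ V ∈ nhds p, ∀ q ∈ V,
      EMetric.hausdorffEdist (D p) (D q) ≤ ENNReal.ofReal ε)
    (π π' : unitInterval → U) (hπ : Continuous π) (hπ' : Continuous π')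
    (h0 : π 0 = π' 0) (h1 : π 1 = π' 1)
    (H : unitInterval × unitInterval → U) (hH : Continuous H)
    (hH0 : ∀ t : unitInterval, H (t, 0) = π t)
    (hH1 : ∀ t : unitInterval, H (t, 1) = π' t)
    (hHl : ∀ s : unitInterval, H (0, s) = π 0)
    (hHr : ∀ s : unitInterval, H (1, s) = π 1) :
    ∀ X₀ ∈ D (π 0), ∀ P P' : unitInterval → X,
      IsLift D π P → IsLift D π' P' → P 0 = X₀ → P' 0 = X₀ → P 1 = P' 1 := by
  intro X₀ hX₀ P P' hP hP' hP0 hP'0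
  -- rows of the homotopy are continuous
  have hrow : ∀ s : unitInterval, Continuous (fun t : unitInterval => H (t, s)) := by
    intro s
    exact hH.comp (Continuous.prodMk_left s)
  -- the set of parameters whose row admits a lift from X₀ to P 1
  set S : Set unitInterval := {s | ∃ Q : unitInterval → X,
    IsLift D (fun t => H (t, s)) Q ∧ Q 0 = X₀ ∧ Q 1 = P 1} with hSdef
  -- transfer between close rows preserves endpoints
  have transfer : ∀ s₀ s : unitInterval,
      (∀ t : unitInterval, EMetric.hausdorffEdist (D (H (t, s₀))) (D (H (t, s)))
        ≤ ENNReal.ofReal (c / 4)) → s₀ ∈ S → s ∈ S := by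
    intro s₀ s hclose hs₀
    obtain ⟨Q, hQ, hQ0, hQ1⟩ := hs₀
    obtain ⟨Q', hQ', hQdist⟩ := lift_transfer_aux hc hsep hcont (hrow s) hclose hQ
    have hQ'0 : Q' 0 = X₀ := by
      have hm : Q' 0 ∈ D (π 0) := by simpa only [hHl s] using hQ'.2 0
      refine eq_of_close_aux hsep hm hX₀ ?_
      have := hQdist 0
      rw [hQ0] at this
      rw [dist_comm] at this
      linarith
    have hQ'1 : Q' 1 = P 1 := by
      have hm : Q' 1 ∈ D (π 1) := by simpa only [hHr s] using hQ'.2 1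
      have hm1 : P 1 ∈ D (π 1) := hP.2 1
      refine eq_of_close_aux hsep hm hm1 ?_
      have := hQdist 1
      rw [hQ1] at this
      rw [dist_comm] at this
      linarith
    exact ⟨Q', hQ', hQ'0, hQ'1⟩
  -- S is clopen
  have hopen : IsOpen S := by
    rw [isOpen_iff_mem_nhds]
    intro s₀ hs₀
    obtain ⟨N, hN, hNprop⟩ := row_close_aux hcont hH s₀ (by linarith : (0:ℝ) < c / 4)
    filter_upwards [hN] with s hs
    exact transfer s₀ s (hNprop s hs) hs₀
  have hclosed : IsClosed S := by
    refine isClosed_of_closure_subset ?_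
    intro s₀ hs₀
    obtain ⟨N, hN, hNprop⟩ := row_close_aux hcont hH s₀ (by linarith : (0:ℝ) < c / 4)
    obtain ⟨s, hsN, hsS⟩ := mem_closure_iff_nhds.mp hs₀ N hN
    refine transfer s s₀ ?_ hsS
    intro t
    exact (EMetric.hausdorffEdist_comm).trans_le (hNprop s hsN t)
  have hclopen : IsClopen S := ⟨hclosed, hopen⟩
  have hzero : (0 : unitInterval) ∈ S := by
    refine ⟨P, ?_, hP0, rfl⟩
    have : (fun t : unitInterval => H (t, 0)) = π := funext hH0
    rw [this]
    exact hP
  have hS : S = Set.univ := hclopen.eq_univ ⟨0, hzero⟩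
  have hone : (1 : unitInterval) ∈ S := hS ▸ Set.mem_univ 1
  obtain ⟨Q, hQ, hQ0, hQ1⟩ := hone
  have hQπ' : IsLift D π' Q := by
    have : (fun t : unitInterval => H (t, 1)) = π' := funext hH1
    rwa [this] at hQ
  have : Q = P' := lift_unique_aux hc hsep hQπ' hP' (by rw [hQ0, hP'0])
  rw [← hQ1, this]
end

section
/- Let X be a metric space, c > 0, U a metric space, and D : U → Set X a family of nonempty 2c-separated subsets which is L-Lipschitz in Hausdorff distance for some L ≥ 0 (hausdorffEdist(D(p), D(q)) ≤ L · dist(p,q) for all p, q ∈ U). Let π, π' : [0,1] → U be continuous paths with π(0) = π'(0), and suppose η := L · (sup over t ∈ [0,1] of dist(π(t), π'(t))) < c. Then for every X₀ ∈ D(π(0)), the unique lifts P of π and P' of π' with P(0) = P'(0) = X₀ satisfy dist(P(t), P'(t)) ≤ η for every t ∈ [0,1]; in particular dist(T_π(X₀), T_{π'}(X₀)) ≤ η. -/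
open unitInterval

/-- Abstract form of Proposition 4.6 (continuity of the transport with respect to changes
in the path): if `D` is an `L`-Lipschitz (in Hausdorff distance) family of nonempty
`2c`-separated subsets and `π, π'` are continuous paths with the same starting point such
that `η := L · sup_t dist (π t) (π' t) < c`, then the lifts of `π` and `π'` starting at
the same point `X₀` stay within distance `η` of each other; in particular
`dist (T_π X₀) (T_{π'} X₀) ≤ η`. -/
theorem stmt_11 {X U : Type*} [MetricSpace X] [MetricSpace U]
    (c : ℝ) (hc : 0 < c) (L : ℝ) (hL : 0 ≤ L) (D : U → Set X)
    (hne : ∀ p : U, (D p).Nonempty)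
    (hsep : ∀ p : U, ∀ x ∈ D p, ∀ y ∈ D p, x ≠ y → 2 * c < dist x y)
    (hLip : ∀ p q : U, EMetric.hausdorffEdist (D p) (D q) ≤ ENNReal.ofReal (L * dist p q))
    (π π' : unitInterval → U) (hπ : Continuous π) (hπ' : Continuous π')
    (h0 : π 0 = π' 0)
    (hη : L * (⨆ t : unitInterval, dist (π t) (π' t)) < c) :
    ∀ X₀ ∈ D (π 0), ∀ P P' : unitInterval → X,
      IsLift D π P → IsLift D π' P' → P 0 = X₀ → P' 0 = X₀ →
      ∀ t : unitInterval,
        dist (P t) (P' t) ≤ L * (⨆ s : unitInterval, dist (π s) (π' s)) := by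
  intro X₀ hX₀ P P' hP hP' hP0 hP'0
  set η : ℝ := L * (⨆ s : unitInterval, dist (π s) (π' s)) with hηdef
  have hbdd : BddAbove (Set.range fun s : unitInterval => dist (π s) (π' s)) :=
    (isCompact_range ((continuous_dist.comp (hπ.prodMk hπ'))) ).bddAbove
  have hsup_nonneg : (0:ℝ) ≤ ⨆ s : unitInterval, dist (π s) (π' s) :=
    Real.iSup_nonneg fun s => dist_nonneg
  have hη0 : 0 ≤ η := mul_nonneg hL hsup_nonneg
  have hdle : ∀ t : unitInterval, L * dist (π t) (π' t) ≤ η := by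
    intro t
    exact mul_le_mul_of_nonneg_left (le_ciSup hbdd t) hL
  -- key gap lemma
  have key : ∀ t : unitInterval, dist (P t) (P' t) < c → dist (P t) (P' t) ≤ η := by
    intro t ht
    apply le_of_forall_pos_le_add
    intro ε hε
    set ε' : ℝ := min ε ((c - η) / 2) with hε'def
    have hε'pos : 0 < ε' := lt_min hε (by linarith)
    have hε'lt : η + ε' < c := by
      have : ε' ≤ (c - η) / 2 := min_le_right _ _
      linarith
    have hinf : EMetric.infEdist (P t) (D (π' t)) < ENNReal.ofReal (η + ε') := by
      calc EMetric.infEdist (P t) (D (π' t))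
          ≤ EMetric.hausdorffEdist (D (π t)) (D (π' t)) :=
            EMetric.infEdist_le_hausdorffEdist_of_mem (hP.2 t)
        _ ≤ ENNReal.ofReal (L * dist (π t) (π' t)) := hLip _ _
        _ ≤ ENNReal.ofReal η := ENNReal.ofReal_le_ofReal (hdle t)
        _ < ENNReal.ofReal (η + ε') := by
            apply ENNReal.ofReal_lt_ofReal_iff_of_nonneg hη0 |>.mpr
            linarith
    obtain ⟨y, hy, hyd⟩ := EMetric.infEdist_lt_iff.mp hinf
    have hyd' : dist (P t) y < η + ε' := by
      rw [edist_dist] at hyd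
      exact (ENNReal.ofReal_lt_ofReal_iff_of_nonneg dist_nonneg).mp hyd
    have hyP' : y = P' t := by
      by_contra hne'
      have := hsep (π' t) y hy (P' t) (hP'.2 t) hne'
      have htri : dist y (P' t) ≤ dist y (P t) + dist (P t) (P' t) := dist_triangle _ _ _
      rw [dist_comm y (P t)] at htri
      linarith
    have : dist (P t) (P' t) < η + ε' := hyP' ▸ hyd'
    have : dist (P t) (P' t) < η + ε := lt_of_lt_of_le this (by
      have : ε' ≤ ε := min_le_left _ _
      linarith)
    linarith
  -- clopen argument
  intro t
  set A : Set unitInterval := {s | dist (P s) (P' s) ≤ η} with hAdef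
  set B : Set unitInterval := {s | dist (P s) (P' s) < c} with hBdef
  have hAB : A = B := by
    apply subset_antisymm
    · intro s hs; exact lt_of_le_of_lt hs hη
    · intro s hs; exact key s hs
  have hcont : Continuous fun s : unitInterval => dist (P s) (P' s) :=
    continuous_dist.comp (hP.1.prodMk hP'.1)
  have hAclosed : IsClosed A := isClosed_le hcont continuous_const
  have hAopen : IsOpen A := hAB ▸ (isOpen_lt hcont continuous_const)
  have h0A : (0 : unitInterval) ∈ A := by
    show dist (P 0) (P' 0) ≤ η
    rw [hP0, hP'0, dist_self]
    exact hη0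
  have : A = Set.univ :=
    IsClopen.eq_univ ⟨hAclosed, hAopen⟩ ⟨0, h0A⟩
  have ht : t ∈ A := this ▸ Set.mem_univ t
  exact ht
end

section
/- Let X be a metric space, c > 0, U a topological space, and let D, D' : U → Set X be two Hausdorff-continuous families of nonempty 2c-separated subsets. Suppose there is η < c such that hausdorffEdist(D(p), D'(p)) ≤ η for every p ∈ U. Let π : [0,1] → U be a continuous path, and let X₀ ∈ D(π(0)), Y₀ ∈ D'(π(0)) with dist(X₀, Y₀) ≤ η. Then the unique lifts P of π in D with P(0) = X₀ and Q of π in D' with Q(0) = Y₀ satisfy dist(P(t), Q(t)) ≤ η for every t ∈ [0,1]; in particular dist(P(1), Q(1)) ≤ η. -/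
open unitInterval

/-- Abstract form of Proposition 4.11 (stability of the transport with respect to changes
in the filtering function): given two Hausdorff-continuous families `D, D'` of nonempty
`2c`-separated subsets with `hausdorffEdist (D p) (D' p) ≤ η < c` for all `p`, lifts of a
path `π` in `D` and in `D'` starting at points at distance `≤ η` stay within distance `η`
of each other; in particular their endpoints are at distance `≤ η`. -/
theorem stmt_12 {X U : Type*} [MetricSpace X] [TopologicalSpace U]
    (c : ℝ) (hc : 0 < c) (η : ℝ) (hη : η < c) (D D' : U → Set X)
    (hne : ∀ p : U, (D p).Nonempty) (hne' : ∀ p : U, (D' p).Nonempty)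
    (hsep : ∀ p : U, ∀ x ∈ D p, ∀ y ∈ D p, x ≠ y → 2 * c < dist x y)
    (hsep' : ∀ p : U, ∀ x ∈ D' p, ∀ y ∈ D' p, x ≠ y → 2 * c < dist x y)
    (hcont : ∀ p : U, ∀ ε : ℝ, 0 < ε → ∃ V ∈ nhds p, ∀ q ∈ V,
      EMetric.hausdorffEdist (D p) (D q) ≤ ENNReal.ofReal ε)
    (hcont' : ∀ p : U, ∀ ε : ℝ, 0 < ε → ∃ V ∈ nhds p, ∀ q ∈ V,
      EMetric.hausdorffEdist (D' p) (D' q) ≤ ENNReal.ofReal ε)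
    (hDD' : ∀ p : U, EMetric.hausdorffEdist (D p) (D' p) ≤ ENNReal.ofReal η)
    (π : unitInterval → U) (hπ : Continuous π)
    (X₀ Y₀ : X) (hX₀ : X₀ ∈ D (π 0)) (hY₀ : Y₀ ∈ D' (π 0)) (hXY : dist X₀ Y₀ ≤ η) :
    ∀ P Q : unitInterval → X,
      IsLift D π P → IsLift D' π Q → P 0 = X₀ → Q 0 = Y₀ →
      ∀ t : unitInterval, dist (P t) (Q t) ≤ η := by
  intro P Q hP hQ hP0 hQ0
  have hη0 : 0 ≤ η := le_trans dist_nonneg hXY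
  set f : unitInterval → ℝ := fun t => dist (P t) (Q t) with hf
  have hfc : Continuous f := hP.1.dist hQ.1
  -- dichotomy
  have dich : ∀ t : unitInterval, f t ≤ η ∨ 2 * c - η ≤ f t := by
    intro t
    by_contra h
    push_neg at h
    obtain ⟨h1, h2⟩ := h
    set ε := min (f t - η) (2 * c - η - f t) with hε
    have hε0 : 0 < ε := lt_min (by linarith) (by linarith)
    have hlt : EMetric.hausdorffEdist (D (π t)) (D' (π t)) < ENNReal.ofReal (η + ε) :=
      lt_of_le_of_lt (hDD' (π t))
        (by exact_mod_cast ENNReal.ofReal_lt_ofReal_iff_of_nonneg hη0 |>.mpr (by linarith))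
    obtain ⟨y, hy, hdy⟩ := EMetric.exists_edist_lt_of_hausdorffEdist_lt (hP.2 t) hlt
    have hdy' : dist (P t) y < η + ε := by
      rw [edist_dist] at hdy
      exact (ENNReal.ofReal_lt_ofReal_iff_of_nonneg dist_nonneg).mp hdy
    by_cases hyq : y = Q t
    · have : f t < η + ε := by rw [hf]; simpa [hyq] using hdy'
      have : ε ≤ f t - η := min_le_left _ _
      linarith
    · have hbig : 2 * c < dist y (Q t) := hsep' (π t) y hy (Q t) (hQ.2 t) hyq
      have htri : dist y (Q t) ≤ dist y (P t) + dist (P t) (Q t) := dist_triangle _ _ _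
      rw [dist_comm y (P t)] at htri
      have hεle : ε ≤ 2 * c - η - f t := min_le_right _ _
      have hfr : f t = dist (P t) (Q t) := rfl
      linarith
  -- the set where f ≤ η is clopen
  have key : {t : unitInterval | f t ≤ η} = Set.univ := by
    have heq : {t : unitInterval | f t ≤ η} = {t : unitInterval | f t < c} := by
      ext t
      simp only [Set.mem_setOf_eq]
      constructor
      · intro h; linarith
      · intro h
        rcases dich t with h' | h'
        · exact h'
        · linarith
    have hclopen : IsClopen {t : unitInterval | f t ≤ η} := by
      constructor
      · exact isClosed_le hfc continuous_const
      · rw [heq]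
        exact isOpen_lt hfc continuous_const
    rcases isClopen_iff.mp hclopen with h | h
    · exfalso
      have : (0 : unitInterval) ∈ {t : unitInterval | f t ≤ η} := by
        simp only [Set.mem_setOf_eq, hf, hP0, hQ0]
        exact hXY
      rw [h] at this
      exact this
    · exact h
  intro t
  have : t ∈ {t : unitInterval | f t ≤ η} := key ▸ Set.mem_univ t
  exact this
end

section
/- Let M be a nonempty compact topological space and f = (f₁,f₂) : M → ℝ² continuous. Let (a,b) and (a',b') be pairs with 0 < a < 1, and suppose |a − a'| ≤ ε and |b − b'| ≤ ε where 0 < ε < min(a, 1−a). Then sup over x ∈ M of |f*₍a,b₎(x) − f*₍a',b'₎(x)| ≤ ε · (‖f‖∞ + max(a, 1−a) + |b|) / min(a·(a−ε), (1−a)·(1−a−ε)), where ‖f‖∞ := sup over x ∈ M of max(|f₁(x)|, |f₂(x)|). -/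
lemma ptwise (u v a b a' b' ε : ℝ) (ha0 : 0 < a) (ha1 : a < 1)
    (hε0 : 0 < ε) (hεa : ε < a) (hεa' : ε < 1 - a)
    (haa : |a - a'| ≤ ε) (hbb : |b - b'| ≤ ε) :
    |min a (1 - a) * max ((u - b) / a) ((v + b) / (1 - a)) -
      min a' (1 - a') * max ((u - b') / a') ((v + b') / (1 - a'))| ≤
      ε * (max |u| |v| + max a (1 - a) + |b|) /
        min (a * (a - ε)) ((1 - a) * (1 - a - ε)) := by
  rw [abs_le] at haa hbb
  have ha'0 : 0 < a' := by linarith [haa.2]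
  have h1a' : 0 < 1 - a' := by linarith [haa.1]
  have h1a : (0:ℝ) < 1 - a := by linarith
  have hne1 : (1 - a) ≠ 0 := ne_of_gt h1a
  have hne2 : (1 - a') ≠ 0 := ne_of_gt h1a'
  have haa' : |a' - a| ≤ ε := by rw [abs_le]; constructor <;> linarith [haa.1, haa.2]
  have hbb' : |b - b'| ≤ ε := by rw [abs_le]; exact hbb
  set c := min a (1 - a) with hc
  set c' := min a' (1 - a') with hc'
  have hc0 : (0:ℝ) ≤ c := le_min ha0.le (by linarith)
  have hc'0 : (0:ℝ) ≤ c' := le_min ha'0.le h1a'.le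
  have hc'1 : c' ≤ 1 := le_trans (min_le_left _ _) (by linarith)
  set D := min (a * (a - ε)) ((1 - a) * (1 - a - ε)) with hD
  have hD0 : 0 < D := lt_min (mul_pos ha0 (by linarith)) (mul_pos (by linarith) (by linarith))
  -- key coefficient bounds
  have hca : |c * a' - c' * a| ≤ ε := by
    have e1 : c * a' = min (a * a') ((1 - a) * a') := min_mul_of_nonneg _ _ ha'0.le
    have e2 : c' * a = min (a' * a) ((1 - a') * a) := min_mul_of_nonneg _ _ ha0.le
    rw [e1, e2]
    refine le_trans (abs_min_sub_min_le_max _ _ _ _) (max_le ?_ ?_)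
    · have : a * a' - a' * a = 0 := by ring
      rw [this, abs_zero]; exact hε0.le
    · have : (1 - a) * a' - (1 - a') * a = a' - a := by ring
      rw [this]; exact haa'
  have hcb : |c * (1 - a') - c' * (1 - a)| ≤ ε := by
    have e1 : c * (1 - a') = min (a * (1 - a')) ((1 - a) * (1 - a')) :=
      min_mul_of_nonneg _ _ h1a'.le
    have e2 : c' * (1 - a) = min (a' * (1 - a)) ((1 - a') * (1 - a)) :=
      min_mul_of_nonneg _ _ (by linarith : (0:ℝ) ≤ 1 - a)
    rw [e1, e2]
    refine le_trans (abs_min_sub_min_le_max _ _ _ _) (max_le ?_ ?_)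
    · have : a * (1 - a') - a' * (1 - a) = a - a' := by ring
      rw [this, abs_le]; exact haa
    · have : (1 - a) * (1 - a') - (1 - a') * (1 - a) = 0 := by ring
      rw [this, abs_zero]; exact hε0.le
  -- branch 1
  have br1 : |c * ((u - b) / a) - c' * ((u - b') / a')| ≤
      ε * (max |u| |v| + max a (1 - a) + |b|) / D := by
    have key : c * ((u - b) / a) - c' * ((u - b') / a') =
        (u * (c * a' - c' * a) - ((c * a' - c' * a) * b + c' * a * (b - b'))) / (a * a') := by
      field_simp
      ring
    rw [key, abs_div, abs_of_pos (by positivity : (0:ℝ) < a * a')]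
    have hnum : |u * (c * a' - c' * a) - ((c * a' - c' * a) * b + c' * a * (b - b'))| ≤
        ε * (max |u| |v| + max a (1 - a) + |b|) := by
      have t1 : |u * (c * a' - c' * a)| ≤ |u| * ε := by
        rw [abs_mul]; exact mul_le_mul_of_nonneg_left hca (abs_nonneg u)
      have t2 : |(c * a' - c' * a) * b| ≤ ε * |b| := by
        rw [abs_mul]; exact mul_le_mul_of_nonneg_right hca (abs_nonneg b)
      have t3 : |c' * a * (b - b')| ≤ a * ε := by
        rw [abs_mul, abs_of_nonneg (by positivity : (0:ℝ) ≤ c' * a)]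
        calc c' * a * |b - b'| ≤ 1 * a * ε := by
              apply mul_le_mul (mul_le_mul_of_nonneg_right hc'1 ha0.le) hbb'
                (abs_nonneg _) (by linarith)
          _ = a * ε := by ring
      calc |u * (c * a' - c' * a) - ((c * a' - c' * a) * b + c' * a * (b - b'))|
          ≤ |u * (c * a' - c' * a)| + (|(c * a' - c' * a) * b| + |c' * a * (b - b')|) :=
            (abs_sub _ _).trans (add_le_add_right (abs_add_le _ _) _)
        _ ≤ |u| * ε + (ε * |b| + a * ε) := by gcongr
        _ ≤ ε * (max |u| |v| + max a (1 - a) + |b|) := by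
            have h1 : |u| ≤ max |u| |v| := le_max_left _ _
            have h2 : a ≤ max a (1 - a) := le_max_left _ _
            nlinarith [abs_nonneg u, abs_nonneg b]
    have hden : D ≤ a * a' := le_trans (min_le_left _ _)
      (mul_le_mul_of_nonneg_left (by linarith [haa.2] : a - ε ≤ a') ha0.le)
    exact div_le_div₀ (by positivity) hnum hD0 hden
  -- branch 2
  have br2 : |c * ((v + b) / (1 - a)) - c' * ((v + b') / (1 - a'))| ≤
      ε * (max |u| |v| + max a (1 - a) + |b|) / D := by
    have key : c * ((v + b) / (1 - a)) - c' * ((v + b') / (1 - a')) =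
        (v * (c * (1 - a') - c' * (1 - a)) + ((c * (1 - a') - c' * (1 - a)) * b +
          c' * (1 - a) * (b - b'))) / ((1 - a) * (1 - a')) := by
      field_simp
      ring
    rw [key, abs_div, abs_of_pos (mul_pos h1a h1a')]
    have hnum : |v * (c * (1 - a') - c' * (1 - a)) + ((c * (1 - a') - c' * (1 - a)) * b +
        c' * (1 - a) * (b - b'))| ≤ ε * (max |u| |v| + max a (1 - a) + |b|) := by
      have t1 : |v * (c * (1 - a') - c' * (1 - a))| ≤ |v| * ε := by
        rw [abs_mul]; exact mul_le_mul_of_nonneg_left hcb (abs_nonneg v)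
      have t2 : |(c * (1 - a') - c' * (1 - a)) * b| ≤ ε * |b| := by
        rw [abs_mul]; exact mul_le_mul_of_nonneg_right hcb (abs_nonneg b)
      have t3 : |c' * (1 - a) * (b - b')| ≤ (1 - a) * ε := by
        rw [abs_mul, abs_of_nonneg (mul_nonneg hc'0 h1a.le)]
        calc c' * (1 - a) * |b - b'| ≤ 1 * (1 - a) * ε := by
              apply mul_le_mul (mul_le_mul_of_nonneg_right hc'1 (by linarith)) hbb'
                (abs_nonneg _) (by linarith)
          _ = (1 - a) * ε := by ring
      calc |v * (c * (1 - a') - c' * (1 - a)) + ((c * (1 - a') - c' * (1 - a)) * b +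
            c' * (1 - a) * (b - b'))|
          ≤ |v * (c * (1 - a') - c' * (1 - a))| + (|(c * (1 - a') - c' * (1 - a)) * b| +
            |c' * (1 - a) * (b - b')|) :=
            (abs_add_le _ _).trans (add_le_add_right (abs_add_le _ _) _)
        _ ≤ |v| * ε + (ε * |b| + (1 - a) * ε) := by gcongr
        _ ≤ ε * (max |u| |v| + max a (1 - a) + |b|) := by
            have h1 : |v| ≤ max |u| |v| := le_max_right _ _
            have h2 : (1 - a) ≤ max a (1 - a) := le_max_right _ _
            nlinarith [abs_nonneg v, abs_nonneg b]
    have hden : D ≤ (1 - a) * (1 - a') := le_trans (min_le_right _ _)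
      (mul_le_mul_of_nonneg_left (by linarith [haa.1] : 1 - a - ε ≤ 1 - a') (by linarith))
    exact div_le_div₀ (by positivity) hnum hD0 hden
  rw [mul_max_of_nonneg _ _ hc0, mul_max_of_nonneg _ _ hc'0]
  exact le_trans (abs_max_sub_max_le_max _ _ _ _) (max_le br1 br2)

/-- Proposition 4.5 (sup-norm estimate from Theorem 4.5 of [CeDi*13]): if
`|a − a'| ≤ ε` and `|b − b'| ≤ ε` with `0 < ε < min a (1−a)`, then
`‖f*_(a,b) − f*_(a',b')‖∞ ≤ ε (‖f‖∞ + max a (1−a) + |b|) / min (a(a−ε)) ((1−a)(1−a−ε))`. -/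
theorem stmt_15 {M : Type*} [TopologicalSpace M] [CompactSpace M] [Nonempty M]
    (f₁ f₂ : M → ℝ) (hf₁ : Continuous f₁) (hf₂ : Continuous f₂)
    (a b a' b' ε : ℝ) (ha0 : 0 < a) (ha1 : a < 1)
    (hε0 : 0 < ε) (hε : ε < min a (1 - a))
    (haa : |a - a'| ≤ ε) (hbb : |b - b'| ≤ ε) :
    (⨆ x : M, |fStar f₁ f₂ a b x - fStar f₁ f₂ a' b' x|) ≤
      ε * ((⨆ x : M, max |f₁ x| |f₂ x|) + max a (1 - a) + |b|) /
        min (a * (a - ε)) ((1 - a) * (1 - a - ε)) := by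
  obtain ⟨hεa, hεa'⟩ := lt_min_iff.mp hε
  have hbdd : BddAbove (Set.range fun x : M => max |f₁ x| |f₂ x|) :=
    (isCompact_range ((hf₁.abs).max (hf₂.abs))).bddAbove
  have hD0 : (0:ℝ) < min (a * (a - ε)) ((1 - a) * (1 - a - ε)) :=
    lt_min (mul_pos ha0 (by linarith)) (mul_pos (by linarith) (by linarith))
  apply ciSup_le
  intro x
  refine le_trans (ptwise (f₁ x) (f₂ x) a b a' b' ε ha0 ha1 hε0 hεa hεa' haa hbb) ?_
  have hN : max |f₁ x| |f₂ x| ≤ ⨆ y : M, max |f₁ y| |f₂ y| := le_ciSup hbdd x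
  gcongr
end
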